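/- For every natural number n ≥ 3, there exists a family of directed Hamiltonian cycles in the complete digraph on n vertices whose arc sets together cover all n(n−1) arcs, where the family has n−1 cycles if n is odd and n cycles if n is even; moreover, when n is odd the n−1 directed Hamiltonian cycles can be chosen pairwise arc-disjoint, so that their arc sets partition the arc set of the complete digraph. -/

import Mathlib

/-- A directed Hamiltonian cycle on the vertex set `Fin n`, encoded as a cyclic permutation
`σ` with full support: its arc set is `{(u, σ u) | u : Fin n}`, which consists of exactly
`n` arcs and visits every vertex exactly once. -/
def IsDirHamCycle {n : ℕ} (σ : Equiv.Perm (Fin n)) : Prop :=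
  σ.IsCycle ∧ σ.support = Finset.univ

open Equiv Equiv.Perm Finset

namespace Wal

variable {α β : Type*}

lemma permCongr_one (e : α ≃ β) : e.permCongr (1 : Perm α) = 1 := by
  ext x; simp

lemma permCongr_mul (e : α ≃ β) (π τ : Perm α) :
    e.permCongr (π * τ) = e.permCongr π * e.permCongr τ := by
  ext x; simp [Perm.mul_apply]

lemma permCongr_inv (e : α ≃ β) (π : Perm α) :
    (e.permCongr π)⁻¹ = e.permCongr π⁻¹ := by
  rw [eq_comm, eq_inv_iff_mul_eq_one, ← permCongr_mul, inv_mul_cancel, permCongr_one]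

lemma permCongr_pow (e : α ≃ β) (π : Perm α) (k : ℕ) :
    (e.permCongr π) ^ k = e.permCongr (π ^ k) := by
  induction k with
  | zero => simp [permCongr_one]
  | succ k ih => rw [pow_succ, pow_succ, ih, permCongr_mul]

lemma permCongr_zpow (e : α ≃ β) (π : Perm α) (k : ℤ) :
    (e.permCongr π) ^ k = e.permCongr (π ^ k) := by
  cases k with
  | ofNat k => simpa using permCongr_pow e π k
  | negSucc k => rw [zpow_negSucc, zpow_negSucc, permCongr_pow, permCongr_inv]

lemma permCongr_isCycle (e : α ≃ β) {π : Perm α} (h : π.IsCycle) :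
    (e.permCongr π).IsCycle := by
  obtain ⟨x, hx, hall⟩ := h
  refine ⟨e x, by simp [e.symm_apply_apply, e.injective.ne_iff, hx], fun y hy => ?_⟩
  have hy' : π (e.symm y) ≠ e.symm y := by
    intro hcon
    apply hy
    simp only [permCongr_apply, hcon, e.apply_symm_apply]
  obtain ⟨i, hi⟩ := hall hy'
  exact ⟨i, by rw [permCongr_zpow]; simp [hi]⟩

lemma permCongr_support_univ [DecidableEq α] [Fintype α] [DecidableEq β] [Fintype β]
    (e : α ≃ β) {π : Perm α} (h : π.support = Finset.univ) :
    (e.permCongr π).support = Finset.univ := by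
  rw [Finset.eq_univ_iff_forall]
  intro b
  rw [Perm.mem_support]
  intro hb
  have : π (e.symm b) ≠ e.symm b := by
    rw [← Perm.mem_support, h]; exact Finset.mem_univ _
  apply this
  have := congrArg e.symm hb
  simpa using this




lemma cover_of_discordant {n : ℕ} (σ : Fin (n - 1) → Perm (Fin n))
    (hder : ∀ i u, σ i u ≠ u)
    (hdisc : ∀ i j, i ≠ j → ∀ u, σ i u ≠ σ j u) :
    ∀ u v : Fin n, u ≠ v → ∃ i, σ i u = v := by
  intro u v huv
  classical
  set f : Fin (n - 1) → Fin n := fun i => σ i u with hf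
  have hinj : Function.Injective f := by
    intro i j hij
    by_contra h
    exact hdisc i j h u hij
  have hsub : (Finset.univ.image f) ⊆ Finset.univ.erase u := by
    intro x hx
    obtain ⟨i, _, rfl⟩ := Finset.mem_image.mp hx
    exact Finset.mem_erase.mpr ⟨hder i u, Finset.mem_univ _⟩
  have hcard : (Finset.univ.erase u).card ≤ (Finset.univ.image f).card := by
    rw [Finset.card_image_of_injective _ hinj, Finset.card_erase_of_mem (Finset.mem_univ _)]
    simp
  have heq := Finset.eq_of_subset_of_card_le hsub hcard
  have hv : v ∈ Finset.univ.image f := by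
    rw [heq]; exact Finset.mem_erase.mpr ⟨huv.symm, Finset.mem_univ _⟩
  obtain ⟨i, _, hi⟩ := Finset.mem_image.mp hv
  exact ⟨i, hi⟩

lemma finRotate_val {n : ℕ} (hn : 0 < n) (p : Fin n) :
    (finRotate n p).val = (p.val + 1) % n := by
  rcases n with _ | k
  · omega
  · rw [finRotate_succ_apply, Fin.add_def]
    simp [Fin.val_one', Nat.add_mod_mod]

-- ZMod helpers
variable {m : ℕ}

lemma val_natcast_self (hm : 1 ≤ m) : ((m : ℕ) : ZMod (2 * m)).val = m := by
  haveI : NeZero (2 * m) := ⟨by omega⟩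
  exact ZMod.val_cast_of_lt (by omega)

lemma natcast_val_eq (hm : 1 ≤ m) (z : ZMod (2 * m)) : ((z.val : ℕ) : ZMod (2 * m)) = z := by
  haveI : NeZero (2 * m) := ⟨by omega⟩
  exact ZMod.natCast_rightInverse z

lemma two_mul_eq_zero (hm : 1 ≤ m) {z : ZMod (2 * m)} (h : z + z = 0) :
    z = 0 ∨ z = ((m : ℕ) : ZMod (2 * m)) := by
  haveI : NeZero (2 * m) := ⟨by omega⟩
  have hlt := ZMod.val_lt z
  have hval : (z.val + z.val) % (2 * m) = 0 := by
    rw [← ZMod.val_add, h, ZMod.val_zero]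
  rcases lt_or_ge z.val m with hc | hc
  · left
    have : z.val + z.val < 2 * m := by omega
    rw [Nat.mod_eq_of_lt this] at hval
    have : z.val = 0 := by omega
    rw [← natcast_val_eq hm z, this]; simp
  · right
    have h1 : (z.val + z.val) % (2 * m) = z.val + z.val - 2 * m := by
      rw [Nat.mod_eq_sub_mod (by omega), Nat.mod_eq_of_lt (by omega)]
    have : z.val = m := by omega
    rw [← natcast_val_eq hm z, this]

lemma val_two_mul_even (hm : 1 ≤ m) (z : ZMod (2 * m)) : (z + z).val % 2 = 0 := by
  haveI : NeZero (2 * m) := ⟨by omega⟩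
  rw [ZMod.val_add, Nat.mod_mod_of_dvd _ ⟨m, rfl⟩]
  omega

lemma val_one_2m (hm : 1 ≤ m) : (1 : ZMod (2 * m)).val = 1 := by
  rw [ZMod.val_one_eq_one_mod]
  exact Nat.mod_eq_of_lt (by omega)

lemma two_mul_ne_one (hm : 1 ≤ m) (z : ZMod (2 * m)) : z + z ≠ 1 := by
  haveI : NeZero (2 * m) := ⟨by omega⟩
  intro h
  have h1 := val_two_mul_even hm z
  rw [h, val_one_2m hm] at h1
  omega

lemma two_mul_ne_neg_one (hm : 1 ≤ m) (z : ZMod (2 * m)) : z + z ≠ -1 := by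
  haveI : NeZero (2 * m) := ⟨by omega⟩
  intro h
  have h1 := val_two_mul_even hm z
  have hne : (1 : ZMod (2 * m)) ≠ 0 := by
    intro hc
    have := congrArg ZMod.val hc
    rw [val_one_2m hm, ZMod.val_zero] at this
    omega
  rw [h, ZMod.neg_val, if_neg hne, val_one_2m hm] at h1
  omega

/-- from `j = k + m` with both vals `< m`, contradiction -/
lemma ne_shift (hm : 1 ≤ m) {j k : ZMod (2 * m)} (hj : j.val < m) (hk : k.val < m)
    (h : j = k + ((m : ℕ) : ZMod (2 * m))) : False := by
  haveI : NeZero (2 * m) := ⟨by omega⟩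
  have : j.val = (k.val + m) % (2 * m) := by
    rw [h, ZMod.val_add, val_natcast_self hm]
  rw [Nat.mod_eq_of_lt (by omega)] at this
  omega

/-- consequence of `2*(j-k)=0` for vals `< m`: `j = k` -/
lemma eq_of_two_mul_sub (hm : 1 ≤ m) {j k : ZMod (2 * m)} (hj : j.val < m) (hk : k.val < m)
    (h : (j - k) + (j - k) = 0) : j = k := by
  rcases two_mul_eq_zero hm h with h1 | h1
  · have : j = k := by linear_combination h1
    exact this
  · exact absurd (by linear_combination h1) (fun hc => ne_shift hm hj hk hc)




variable {m : ℕ}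

def bfun (m : ℕ) (p : ℕ) : ZMod (2 * m) :=
  if p % 2 = 0 then -((p / 2 : ℕ) : ZMod (2 * m)) else ((p / 2 + 1 : ℕ) : ZMod (2 * m))

lemma bfun_even (i : ℕ) : bfun m (2 * i) = -((i : ℕ) : ZMod (2 * m)) := by
  unfold bfun
  rw [if_pos (by omega)]
  congr 2
  omega

lemma bfun_odd (i : ℕ) : bfun m (2 * i + 1) = ((i + 1 : ℕ) : ZMod (2 * m)) := by
  unfold bfun
  rw [if_neg (by omega)]
  congr 1
  omega

lemma cast_eq_zero_iff (hm : 1 ≤ m) {i : ℕ} (hi : i < 2 * m) :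
    ((i : ℕ) : ZMod (2 * m)) = 0 ↔ i = 0 := by
  haveI : NeZero (2 * m) := ⟨by omega⟩
  constructor
  · intro h
    have := congrArg ZMod.val h
    rwa [ZMod.val_cast_of_lt hi, ZMod.val_zero] at this
  · intro h; simp [h]

lemma bfun_val_even (hm : 1 ≤ m) {i : ℕ} (hi : i < m) :
    (bfun m (2 * i)).val = if i = 0 then 0 else 2 * m - i := by
  haveI : NeZero (2 * m) := ⟨by omega⟩
  rw [bfun_even, ZMod.neg_val]
  split_ifs with h1 h2 h2
  · rfl
  · exact absurd ((cast_eq_zero_iff hm (by omega)).mp h1) h2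
  · exact absurd ((cast_eq_zero_iff hm (by omega)).mpr h2) h1
  · rw [ZMod.val_cast_of_lt (by omega)]

lemma bfun_val_odd (hm : 1 ≤ m) {i : ℕ} (hi : i < m) :
    (bfun m (2 * i + 1)).val = i + 1 := by
  haveI : NeZero (2 * m) := ⟨by omega⟩
  rw [bfun_odd, ZMod.val_cast_of_lt (by omega)]

lemma bfun_inj (hm : 1 ≤ m) {p q : ℕ} (hp : p < 2 * m) (hq : q < 2 * m)
    (h : bfun m p = bfun m q) : p = q := by
  have hv := congrArg ZMod.val h
  rcases Nat.even_or_odd p with ⟨i, hi⟩ | ⟨i, hi⟩ <;>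
    rcases Nat.even_or_odd q with ⟨i', hi'⟩ | ⟨i', hi'⟩
  · have e1 : p = 2 * i := by omega
    have e2 : q = 2 * i' := by omega
    subst e1; subst e2
    rw [bfun_val_even hm (by omega), bfun_val_even hm (by omega)] at hv
    split_ifs at hv <;> omega
  · have e1 : p = 2 * i := by omega
    have e2 : q = 2 * i' + 1 := by omega
    subst e1; subst e2
    rw [bfun_val_even hm (by omega), bfun_val_odd hm (by omega)] at hv
    split_ifs at hv <;> omega
  · have e1 : p = 2 * i + 1 := by omega
    have e2 : q = 2 * i' := by omega
    subst e1; subst e2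
    rw [bfun_val_odd hm (by omega), bfun_val_even hm (by omega)] at hv
    split_ifs at hv <;> omega
  · have e1 : p = 2 * i + 1 := by omega
    have e2 : q = 2 * i' + 1 := by omega
    subst e1; subst e2
    rw [bfun_val_odd hm (by omega), bfun_val_odd hm (by omega)] at hv
    omega

noncomputable def Beq (m : ℕ) (hm : 1 ≤ m) : Fin (2 * m) ≃ ZMod (2 * m) := by
  haveI : NeZero (2 * m) := ⟨by omega⟩
  exact Equiv.ofBijective (fun p => bfun m p.val)
    ((Fintype.bijective_iff_injective_and_card _).mpr
      ⟨fun p q h => Fin.ext (bfun_inj hm p.isLt q.isLt h), by simp [ZMod.card]⟩)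

lemma Beq_apply (hm : 1 ≤ m) (p : Fin (2 * m)) : Beq m hm p = bfun m p.val := rfl

noncomputable def TP (m : ℕ) (hm : 1 ≤ m) (j : ZMod (2 * m)) : Perm (ZMod (2 * m)) :=
  ((Beq m hm).trans (Equiv.addRight j)).permCongr (finRotate (2 * m))

lemma TP_step (hm : 1 ≤ m) (j : ZMod (2 * m)) (p : ℕ) (hp : p + 1 < 2 * m) :
    TP m hm j (bfun m p + j) = bfun m (p + 1) + j := by
  set E := (Beq m hm).trans (Equiv.addRight j) with hE
  have h0 : E ⟨p, by omega⟩ = bfun m p + j := rfl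
  have h1 : finRotate (2 * m) ⟨p, by omega⟩ = ⟨p + 1, hp⟩ :=
    Fin.ext (by rw [finRotate_val (by omega)]; exact Nat.mod_eq_of_lt hp)
  have h2 : TP m hm j (E ⟨p, by omega⟩) = E (finRotate (2 * m) ⟨p, by omega⟩) := by
    simp [TP, Equiv.permCongr_apply, hE]
  rw [h0, h1] at h2
  exact h2

lemma exists_step (hm : 1 ≤ m) {d : ZMod (2 * m)} (hd : d ≠ 0) :
    ∃ p p' : ℕ, p + 1 < 2 * m ∧ p' + 1 < 2 * m ∧
      bfun m (p + 1) - bfun m p = d ∧ bfun m (p' + 1) - bfun m p' = -d ∧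
      bfun m p' = bfun m p + d + ((m : ℕ) : ZMod (2 * m)) := by
  haveI : NeZero (2 * m) := ⟨by omega⟩
  have htl : d.val < 2 * m := ZMod.val_lt d
  have ht1 : 1 ≤ d.val := by
    rcases Nat.eq_zero_or_pos d.val with h | h
    · exact absurd (by rw [← natcast_val_eq hm d, h]; simp) hd
    · omega
  have hd' : ((d.val : ℕ) : ZMod (2 * m)) = d := natcast_val_eq hm d
  have hz : ((2 * m : ℕ) : ZMod (2 * m)) = 0 := ZMod.natCast_self _
  push_cast at hz
  rcases Nat.even_or_odd d.val with ⟨e, he⟩ | ⟨i, hi⟩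
  · -- d.val = 2 * e even, 1 ≤ e ≤ m - 1
    have he1 : 1 ≤ e := by omega
    have he2 : e ≤ m - 1 := by omega
    refine ⟨2 * (m - 1 - e) + 1, 2 * (e - 1) + 1, by omega, by omega, ?_, ?_, ?_⟩
    · have h1 : 2 * (m - 1 - e) + 1 + 1 = 2 * ((m - 1 - e) + 1) := by ring
      rw [h1, bfun_even, bfun_odd]
      rw [← hd']
      have hc : d.val = 2 * e := by omega
      rw [hc]
      have hmm : (m - 1 - e) + 1 + e + (m - 1 - e + 1) + e = 2 * m := by omega
      have := congrArg (fun t : ℕ => (t : ZMod (2 * m))) hmm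
      push_cast at this ⊢
      linear_combination -this - hz
    · have h1 : 2 * (e - 1) + 1 + 1 = 2 * ((e - 1) + 1) := by ring
      rw [h1, bfun_even, bfun_odd]
      rw [← hd']
      have hc : d.val = 2 * e := by omega
      rw [hc]
      have hmm : (e - 1) + 1 = e := by omega
      rw [hmm]
      push_cast
      ring
    · rw [bfun_odd, bfun_odd, ← hd']
      have hc : d.val = 2 * e := by omega
      rw [hc]
      have hmm : ((e - 1) + 1 : ℕ) = e := by omega
      rw [hmm]
      have hmm2 : ((m - 1 - e) + 1 + 2 * e + m : ℕ) = 2 * m + e := by omega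
      have := congrArg (fun t : ℕ => (t : ZMod (2 * m))) hmm2
      push_cast at this ⊢
      linear_combination -this - hz
  · -- d.val = 2 * i + 1 odd, 0 ≤ i ≤ m - 1
    have hi2 : i ≤ m - 1 := by omega
    refine ⟨2 * i, 2 * (m - 1 - i), by omega, by omega, ?_, ?_, ?_⟩
    · have h1 : 2 * i + 1 = 2 * i + 1 := rfl
      rw [show 2 * i + 1 = 2 * i + 1 from rfl, bfun_odd, bfun_even, ← hd']
      have hc : d.val = 2 * i + 1 := by omega
      rw [hc]
      push_cast
      ring
    · rw [show 2 * (m - 1 - i) + 1 = 2 * (m - 1 - i) + 1 from rfl, bfun_odd, bfun_even, ← hd']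
      have hc : d.val = 2 * i + 1 := by omega
      rw [hc]
      have hmm : (m - 1 - i) + 1 + (m - 1 - i) + (2 * i + 1) = 2 * m := by omega
      have := congrArg (fun t : ℕ => (t : ZMod (2 * m))) hmm
      push_cast at this ⊢
      linear_combination this + hz
    · rw [bfun_even, bfun_even, ← hd']
      have hc : d.val = 2 * i + 1 := by omega
      rw [hc]
      have hmm : ((m - 1 - i) + (2 * i + 1) + m : ℕ) = 2 * m + i := by omega
      have := congrArg (fun t : ℕ => (t : ZMod (2 * m))) hmm
      push_cast at this ⊢
      linear_combination -this - hz

lemma even_main (m : ℕ) (hm : 2 ≤ m) :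
    ∃ σ : Fin (2 * m) → Perm (Fin (2 * m)),
      (∀ i, (σ i).IsCycle ∧ (σ i).support = Finset.univ) ∧
      (∀ u v : Fin (2 * m), u ≠ v → ∃ i, σ i u = v) := by
  haveI : NeZero (2 * m) := ⟨by omega⟩
  have hm1 : 1 ≤ m := by omega
  set F : ZMod (2 * m) ≃ Fin (2 * m) := (Beq m hm1).symm with hF
  set P : ℕ → Perm (ZMod (2 * m)) := fun j => TP m hm1 ((j : ℕ) : ZMod (2 * m)) with hP
  refine ⟨fun i => if i.val < m then F.permCongr (P i.val)
    else (F.permCongr (P (i.val - m)))⁻¹, ?_, ?_⟩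
  · intro i
    have hcyc : ∀ j : ℕ, (P j).IsCycle ∧ (P j).support = Finset.univ := by
      intro j
      constructor
      · exact permCongr_isCycle _ (isCycle_finRotate_of_le (by omega))
      · exact permCongr_support_univ _ (support_finRotate_of_le (by omega))
    by_cases h : i.val < m
    · simp only [if_pos h]
      exact ⟨permCongr_isCycle _ (hcyc _).1, permCongr_support_univ _ (hcyc _).2⟩
    · simp only [if_neg h]
      exact ⟨(permCongr_isCycle _ (hcyc _).1).inv,
        by rw [Perm.support_inv]; exact permCongr_support_univ _ (hcyc _).2⟩
  · intro u v huv
    set U : ZMod (2 * m) := F.symm u with hU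
    set V : ZMod (2 * m) := F.symm v with hV
    have hd : V - U ≠ 0 := by
      rw [sub_ne_zero]
      exact fun hc => huv (by rw [← F.apply_symm_apply u, ← F.apply_symm_apply v, ← hU, ← hV, hc])
    obtain ⟨p, p', hp, hp', hs1, hs2, hB⟩ := exists_step hm1 hd
    set j0 : ZMod (2 * m) := U - bfun m p with hj0
    have hmm0 : ((m : ℕ) : ZMod (2 * m)) + ((m : ℕ) : ZMod (2 * m)) = 0 := by
      have : ((2 * m : ℕ) : ZMod (2 * m)) = 0 := ZMod.natCast_self _
      push_cast at this
      linear_combination this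
    rcases lt_or_ge j0.val m with hc | hc
    · refine ⟨⟨j0.val, by omega⟩, ?_⟩
      simp only [if_pos hc]
      rw [Equiv.permCongr_apply]
      rw [Equiv.apply_eq_iff_eq_symm_apply]
      have hcast : ((j0.val : ℕ) : ZMod (2 * m)) = j0 := natcast_val_eq hm1 j0
      have hU' : F.symm u = bfun m p + j0 := by rw [← hU, hj0]; ring
      rw [hU', hP]
      simp only
      rw [hcast, TP_step hm1 j0 p hp]
      rw [← hV]
      linear_combination hs1
    · set k : ZMod (2 * m) := V - bfun m p' with hk
      have hkj : k = j0 + ((m : ℕ) : ZMod (2 * m)) := by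
        rw [hk, hj0]
        linear_combination -hB - hmm0
      have hkval : k.val = j0.val - m := by
        have h1 : k.val = (j0.val + m) % (2 * m) := by
          rw [hkj, ZMod.val_add, val_natcast_self hm1]
        have h2 := ZMod.val_lt j0
        rw [h1, Nat.mod_eq_sub_mod (by omega), Nat.mod_eq_of_lt (by omega)]
        omega
      have hkm : k.val < m := by
        have := ZMod.val_lt j0
        omega
      refine ⟨⟨k.val + m, by omega⟩, ?_⟩
      have hnl : ¬ (k.val + m < m) := by omega
      simp only [if_neg hnl]
      have hsub : k.val + m - m = k.val := by omega
      rw [hsub, permCongr_inv, Equiv.permCongr_apply, Equiv.apply_eq_iff_eq_symm_apply,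
        Perm.inv_eq_iff_eq]
      have hcast : ((k.val : ℕ) : ZMod (2 * m)) = k := natcast_val_eq hm1 k
      have hV' : F.symm v = bfun m p' + k := by rw [← hV, hk]; ring
      rw [hV', hP]
      simp only
      rw [hcast, TP_step hm1 k p' hp']
      rw [← hU]
      linear_combination -hs2

/-! ### Odd case -/

def afun (m : ℕ) (p : ℕ) : Option (ZMod (2 * m)) :=
  if p = 0 then none
  else if p % 2 = 0 then some ((p / 2 : ℕ) : ZMod (2 * m))
  else some (-((p / 2 : ℕ) : ZMod (2 * m)))

lemma afun_zero : afun m 0 = none := rfl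

lemma afun_even {i : ℕ} (hi : 1 ≤ i) : afun m (2 * i) = some ((i : ℕ) : ZMod (2 * m)) := by
  unfold afun
  rw [if_neg (by omega), if_pos (by omega)]
  congr 2
  omega

lemma afun_odd (i : ℕ) : afun m (2 * i + 1) = some (-((i : ℕ) : ZMod (2 * m))) := by
  unfold afun
  rw [if_neg (by omega), if_neg (by omega)]
  congr 3
  omega

lemma afun_inj (hm : 1 ≤ m) {p q : ℕ} (hp : p < 2 * m + 1) (hq : q < 2 * m + 1)
    (h : afun m p = afun m q) : p = q := by
  haveI : NeZero (2 * m) := ⟨by omega⟩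
  have hval : ∀ r : ℕ, r < 2 * m + 1 → 1 ≤ r →
      (afun m r).map ZMod.val = some (if r % 2 = 0 then r / 2 else
        (if r / 2 = 0 then 0 else 2 * m - r / 2)) := by
    intro r hr hr1
    rcases Nat.even_or_odd r with ⟨i, hi⟩ | ⟨i, hi⟩
    · have e1 : r = 2 * i := by omega
      subst e1
      rw [afun_even (by omega)]
      simp only [Option.map_some]
      rw [ZMod.val_cast_of_lt (by omega)]
      congr 1
      rw [if_pos (by omega)]
      omega
    · have e1 : r = 2 * i + 1 := by omega
      subst e1
      rw [afun_odd]
      simp only [Option.map_some]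
      rw [if_neg (by omega)]
      rw [ZMod.neg_val]
      have hdiv : (2 * i + 1) / 2 = i := by omega
      rw [hdiv]
      split_ifs with h1 h2 h2
      · rfl
      · exact absurd ((cast_eq_zero_iff hm (by omega)).mp h1) h2
      · exact absurd ((cast_eq_zero_iff hm (by omega)).mpr h2) h1
      · rw [ZMod.val_cast_of_lt (by omega)]
  rcases Nat.eq_zero_or_pos p with h0 | h0 <;> rcases Nat.eq_zero_or_pos q with h0' | h0'
  · omega
  · subst h0
    rw [afun_zero] at h
    have := hval q hq (by omega)
    rw [← h] at this
    simp at this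
  · subst h0'
    rw [afun_zero] at h
    have := hval p hp (by omega)
    rw [h] at this
    simp at this
  · have h1 := hval p hp h0
    have h2 := hval q hq h0'
    rw [h, h2] at h1
    simp only [Option.some_inj] at h1
    split_ifs at h1 <;> omega

noncomputable def Aeq (m : ℕ) (hm : 1 ≤ m) : Fin (2 * m + 1) ≃ Option (ZMod (2 * m)) := by
  haveI : NeZero (2 * m) := ⟨by omega⟩
  exact Equiv.ofBijective (fun p => afun m p.val)
    ((Fintype.bijective_iff_injective_and_card _).mpr
      ⟨fun p q h => Fin.ext (afun_inj hm p.isLt q.isLt h), by simp [ZMod.card]⟩)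

def Tj (m : ℕ) (j : ZMod (2 * m)) : Option (ZMod (2 * m)) ≃ Option (ZMod (2 * m)) :=
  Equiv.optionCongr (Equiv.addRight j)

lemma Tj_none (j : ZMod (2 * m)) : Tj m j none = none := rfl

lemma Tj_some (j x : ZMod (2 * m)) : Tj m j (some x) = some (x + j) := rfl

noncomputable def CP (m : ℕ) (hm : 1 ≤ m) (j : ZMod (2 * m)) :
    Perm (Option (ZMod (2 * m))) :=
  ((Aeq m hm).trans (Tj m j)).permCongr (finRotate (2 * m + 1))

def cfun (m : ℕ) (j : ZMod (2 * m)) (u : Option (ZMod (2 * m))) : Option (ZMod (2 * m)) :=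
  match u with
  | none => some j
  | some X =>
    if (X - j).val = m then none
    else if 1 ≤ (X - j).val ∧ (X - j).val < m then some (j - (X - j))
    else some (j + 1 - (X - j))

lemma cfun_none (j : ZMod (2 * m)) : cfun m j none = some j := rfl

lemma cfun_some (j X : ZMod (2 * m)) :
    cfun m j (some X) =
      if (X - j).val = m then none
      else if 1 ≤ (X - j).val ∧ (X - j).val < m then some (j - (X - j))
      else some (j + 1 - (X - j)) := rfl

lemma cfun_shift (j : ZMod (2 * m)) (w : Option (ZMod (2 * m))) :
    cfun m j (Tj m j w) = Tj m j (cfun m 0 w) := by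
  cases w with
  | none =>
    rw [Tj_none, cfun_none, cfun_none, Tj_some, zero_add]
  | some x =>
    rw [Tj_some, cfun_some, cfun_some]
    rw [add_sub_cancel_right, sub_zero]
    split_ifs with h1 h2
    · rw [Tj_none]
    · rw [Tj_some]
      congr 1
      ring
    · rw [Tj_some]
      congr 1
      ring

lemma cfun_base (hm : 1 ≤ m) (p : ℕ) (hp : p < 2 * m + 1) :
    cfun m 0 (afun m p) = afun m ((p + 1) % (2 * m + 1)) := by
  haveI : NeZero (2 * m) := ⟨by omega⟩
  rcases Nat.eq_zero_or_pos p with h0 | h0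
  · subst h0
    rw [afun_zero, cfun_none]
    have hmod : (0 + 1) % (2 * m + 1) = 1 := Nat.mod_eq_of_lt (by omega)
    rw [hmod, show (1 : ℕ) = 2 * 0 + 1 by norm_num, afun_odd]
    simp
  rcases Nat.even_or_odd p with ⟨i, hi⟩ | ⟨i, hi⟩
  · -- p = 2i, 1 ≤ i ≤ m
    have e1 : p = 2 * i := by omega
    subst e1
    rw [afun_even (by omega), cfun_some, sub_zero]
    rw [ZMod.val_cast_of_lt (show i < 2 * m by omega)]
    by_cases him : i = m
    · rw [if_pos him]
      have : (2 * i + 1) % (2 * m + 1) = 0 := by rw [him]; exact Nat.mod_self _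
      rw [this, afun_zero]
    · rw [if_neg him, if_pos ⟨by omega, by omega⟩]
      rw [Nat.mod_eq_of_lt (by omega)]
      rw [afun_odd]
      congr 1
      ring
  · -- p = 2i + 1, i ≤ m - 1
    have e1 : p = 2 * i + 1 := by omega
    subst e1
    rw [afun_odd, cfun_some, sub_zero]
    have hiv : ((i : ℕ) : ZMod (2 * m)).val = i := ZMod.val_cast_of_lt (by omega)
    rcases Nat.eq_zero_or_pos i with hz | hz
    · subst hz
      simp only [Nat.cast_zero, neg_zero, ZMod.val_zero]
      rw [if_neg (by omega), if_neg (by omega)]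
      rw [Nat.mod_eq_of_lt (by omega)]
      have : (2 * 0 + 1 + 1 : ℕ) = 2 * 1 := by omega
      rw [this, afun_even (by omega)]
      simp
    · have hnv : (-((i : ℕ) : ZMod (2 * m))).val = 2 * m - i := by
        rw [ZMod.neg_val, if_neg (by
          intro hc
          have := (cast_eq_zero_iff hm (by omega)).mp hc
          omega), hiv]
      rw [hnv]
      rw [if_neg (by omega), if_neg (by omega)]
      rw [Nat.mod_eq_of_lt (by omega)]
      have : (2 * i + 1 + 1 : ℕ) = 2 * (i + 1) := by omega
      rw [this, afun_even (by omega)]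
      congr 1
      push_cast
      ring

lemma CP_eq (hm : 1 ≤ m) (j : ZMod (2 * m)) (u : Option (ZMod (2 * m))) :
    CP m hm j u = cfun m j u := by
  set E := (Aeq m hm).trans (Tj m j) with hE
  obtain ⟨p, rfl⟩ := E.surjective u
  have h1 : CP m hm j (E p) = E (finRotate (2 * m + 1) p) := by
    simp [CP, Equiv.permCongr_apply, hE]
  have h2 : E p = Tj m j (afun m p.val) := rfl
  have h3 : E (finRotate (2 * m + 1) p) = Tj m j (afun m ((p.val + 1) % (2 * m + 1))) := by
    have : (finRotate (2 * m + 1) p).val = (p.val + 1) % (2 * m + 1) :=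
      finRotate_val (by omega) p
    rw [show E (finRotate (2 * m + 1) p) = Tj m j (afun m (finRotate (2 * m + 1) p).val)
      from rfl, this]
  rw [h1, h3, h2, cfun_shift, cfun_base hm p.val p.isLt]

lemma val_m_eq (hm : 1 ≤ m) {y : ZMod (2 * m)} (h : y.val = m) :
    y = ((m : ℕ) : ZMod (2 * m)) := by
  haveI : NeZero (2 * m) := ⟨by omega⟩
  rw [← natcast_val_eq hm y, h]

lemma val_neg_of_pos (hm : 1 ≤ m) {y : ZMod (2 * m)} (h : 1 ≤ y.val) :
    (-y).val = 2 * m - y.val := by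
  haveI : NeZero (2 * m) := ⟨by omega⟩
  rw [ZMod.neg_val, if_neg (by
    intro hc
    rw [hc, ZMod.val_zero] at h
    omega)]

lemma val_one_sub (hm : 1 ≤ m) {y : ZMod (2 * m)} (h : m < y.val) :
    (1 - y).val = 2 * m - y.val + 1 := by
  haveI : NeZero (2 * m) := ⟨by omega⟩
  have h2 := ZMod.val_lt y
  have h1 : (1 - y : ZMod (2 * m)) = 1 + -y := by ring
  rw [h1, ZMod.val_add, val_one_2m hm, val_neg_of_pos hm (by omega),
    Nat.mod_eq_of_lt (by omega)]
  omega

lemma D1 (hm : 1 ≤ m) {j k : ZMod (2 * m)} (hj : j.val < m) (hk : k.val < m)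
    (u : Option (ZMod (2 * m))) (h : cfun m j u = cfun m k u) : j = k := by
  haveI : NeZero (2 * m) := ⟨by omega⟩
  cases u with
  | none =>
    rw [cfun_none, cfun_none, Option.some_inj] at h
    exact h
  | some X =>
    rw [cfun_some, cfun_some] at h
    split_ifs at h
    · -- both none-branches
      have hy : (X - j).val = m := by assumption
      have hz : (X - k).val = m := by assumption
      have hyz : X - j = X - k := by rw [val_m_eq hm hy, val_m_eq hm hz]
      linear_combination -hyz
    · injection h with h
      exact eq_of_two_mul_sub hm hj hk (by linear_combination h)
    · injection h with h
      exact absurd (show (j - k) + (j - k) = 1 by linear_combination h)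
        (two_mul_ne_one hm _)
    · injection h with h
      exact absurd (show (j - k) + (j - k) = -1 by linear_combination h)
        (two_mul_ne_neg_one hm _)
    · injection h with h
      exact eq_of_two_mul_sub hm hj hk (by linear_combination h)

lemma D2 (hm : 1 ≤ m) {j k : ZMod (2 * m)} (hj : j.val < m) (hk : k.val < m)
    (u w : Option (ZMod (2 * m))) (h1 : cfun m j u = w) (h2 : cfun m k w = u) : False := by
  haveI : NeZero (2 * m) := ⟨by omega⟩
  cases u with
  | none =>
    rw [cfun_none] at h1
    subst h1
    rw [cfun_some] at h2
    split_ifs at h2 with hc1 hc2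
    exact ne_shift hm hj hk (by linear_combination val_m_eq hm hc1)
  | some X =>
    cases w with
    | none =>
      rw [cfun_some] at h1
      rw [cfun_none, Option.some_inj] at h2
      split_ifs at h1 with hc1 hc2
      subst h2
      exact ne_shift hm hk hj (by linear_combination val_m_eq hm hc1)
    | some W =>
      rw [cfun_some] at h1
      rw [cfun_some] at h2
      split_ifs at h1 h2
      -- remaining: (B,B'), (B,C'), (C,B'), (C,C')
      · -- B, B'
        injection h1 with h1
        injection h2 with h2
        have key : (j - k) + (j - k) = 0 := by linear_combination h1 - h2
        rcases two_mul_eq_zero hm key with hjk | hjk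
        · have hjk' : j = k := by linear_combination hjk
          subst hjk'
          have hcB : 1 ≤ (X - j).val ∧ (X - j).val < m := by assumption
          have hcB' : 1 ≤ (W - j).val ∧ (W - j).val < m := by assumption
          have hW : W - j = -(X - j) := by linear_combination -h1
          have hv : (W - j).val = 2 * m - (X - j).val := by
            rw [hW, val_neg_of_pos hm hcB.1]
          omega
        · exact ne_shift hm hj hk (by linear_combination hjk)
      · -- B, C'
        injection h1 with h1
        injection h2 with h2
        exact absurd (show (j - k) + (j - k) = 1 by linear_combination h1 - h2)
          (two_mul_ne_one hm _)
      · -- C, B'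
        injection h1 with h1
        injection h2 with h2
        exact absurd (show (k - j) + (k - j) = 1 by linear_combination h2 - h1)
          (two_mul_ne_one hm _)
      · -- C, C'
        injection h1 with h1
        injection h2 with h2
        have key : (j - k) + (j - k) = 0 := by linear_combination h1 - h2
        rcases two_mul_eq_zero hm key with hjk | hjk
        · have hjk' : j = k := by linear_combination hjk
          subst hjk'
          have hcm : ¬ (X - j).val = m := by assumption
          have hcC : ¬ (1 ≤ (X - j).val ∧ (X - j).val < m) := by assumption
          have hcm' : ¬ (W - j).val = m := by assumption
          have hcC' : ¬ (1 ≤ (W - j).val ∧ (W - j).val < m) := by assumption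
          have hW : W - j = 1 - (X - j) := by linear_combination -h1
          have hx : (X - j).val = 0 ∨ m < (X - j).val := by omega
          rcases hx with hx | hx
          · have hXj : X - j = 0 := by
              rw [← natcast_val_eq hm (X - j), hx]
              simp
            rw [hXj, sub_zero] at hW
            have : (W - j).val = 1 := by rw [hW]; exact val_one_2m hm
            omega
          · have hv : (W - j).val = 2 * m - (X - j).val + 1 := by
              rw [hW, val_one_sub hm hx]
            have h2m := ZMod.val_lt (X - j)
            omega
        · exact ne_shift hm hj hk (by linear_combination hjk)

lemma odd_main (m : ℕ) (hm : 1 ≤ m) :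
    ∃ σ : Fin (2 * m) → Perm (Fin (2 * m + 1)),
      (∀ i, (σ i).IsCycle ∧ (σ i).support = Finset.univ) ∧
      (∀ i j, i ≠ j → ∀ u, σ i u ≠ σ j u) := by
  haveI : NeZero (2 * m) := ⟨by omega⟩
  set F : Option (ZMod (2 * m)) ≃ Fin (2 * m + 1) := (Aeq m hm).symm with hF
  set C : ℕ → Perm (Option (ZMod (2 * m))) :=
    fun j => CP m hm ((j : ℕ) : ZMod (2 * m)) with hC
  have hCeq : ∀ (j : ℕ) (u), C j u = cfun m ((j : ℕ) : ZMod (2 * m)) u :=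
    fun j u => CP_eq hm _ u
  have hvlt : ∀ a : ℕ, a < m → (((a : ℕ) : ZMod (2 * m))).val = a ∧
      (((a : ℕ) : ZMod (2 * m))).val < m := by
    intro a ha
    have : (((a : ℕ) : ZMod (2 * m))).val = a := ZMod.val_cast_of_lt (by omega)
    exact ⟨this, by omega⟩
  refine ⟨fun i => if i.val < m then F.permCongr (C i.val)
    else (F.permCongr (C (i.val - m)))⁻¹, ?_, ?_⟩
  · intro i
    have hcyc : ∀ j : ℕ, (C j).IsCycle ∧ (C j).support = Finset.univ := by
      intro j
      constructor
      · exact permCongr_isCycle _ (isCycle_finRotate_of_le (by omega))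
      · exact permCongr_support_univ _ (support_finRotate_of_le (by omega))
    by_cases h : i.val < m
    · simp only [if_pos h]
      exact ⟨permCongr_isCycle _ (hcyc _).1, permCongr_support_univ _ (hcyc _).2⟩
    · simp only [if_neg h]
      exact ⟨(permCongr_isCycle _ (hcyc _).1).inv,
        by rw [Perm.support_inv]; exact permCongr_support_univ _ (hcyc _).2⟩
  · intro i1 i2 hne u hcon
    by_cases h1 : i1.val < m <;> by_cases h2 : i2.val < m
    · -- fwd fwd
      simp only [if_pos h1, if_pos h2, Equiv.permCongr_apply] at hcon
      have h' := F.injective hcon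
      rw [hCeq, hCeq] at h'
      have := D1 hm (hvlt _ h1).2 (hvlt _ h2).2 _ h'
      have hveq := congrArg ZMod.val this
      rw [(hvlt _ h1).1, (hvlt _ h2).1] at hveq
      exact hne (Fin.ext hveq)
    · -- fwd inv
      simp only [if_pos h1, if_neg h2] at hcon
      rw [permCongr_inv, Equiv.permCongr_apply, Equiv.permCongr_apply] at hcon
      have h' := F.injective hcon
      -- h' : C i1.val U = (C (i2.val - m))⁻¹ U
      have hb : C (i2.val - m) ((C (i2.val - m))⁻¹ (F.symm u)) = F.symm u :=
        Equiv.apply_symm_apply _ _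
      rw [← h'] at hb
      rw [hCeq] at hb
      exact D2 hm (hvlt _ h1).2 (hvlt _ (by omega : i2.val - m < m)).2 _ _
        (hCeq _ _).symm hb
    · -- inv fwd
      simp only [if_neg h1, if_pos h2] at hcon
      rw [permCongr_inv, Equiv.permCongr_apply, Equiv.permCongr_apply] at hcon
      have h' := F.injective hcon.symm
      have hb : C (i1.val - m) ((C (i1.val - m))⁻¹ (F.symm u)) = F.symm u :=
        Equiv.apply_symm_apply _ _
      rw [← h'] at hb
      rw [hCeq] at hb
      exact D2 hm (hvlt _ h2).2 (hvlt _ (by omega : i1.val - m < m)).2 _ _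
        (hCeq _ _).symm hb
    · -- inv inv
      simp only [if_neg h1, if_neg h2] at hcon
      rw [permCongr_inv, permCongr_inv, Equiv.permCongr_apply, Equiv.permCongr_apply] at hcon
      have h' := F.injective hcon
      -- h' : (C a)⁻¹ U = (C b)⁻¹ U
      have ha : C (i1.val - m) ((C (i1.val - m))⁻¹ (F.symm u)) = F.symm u :=
        Equiv.apply_symm_apply _ _
      have hb : C (i2.val - m) ((C (i2.val - m))⁻¹ (F.symm u)) = F.symm u :=
        Equiv.apply_symm_apply _ _
      rw [← h'] at hb
      rw [hCeq] at ha hb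
      have := D1 hm (hvlt _ (by omega : i1.val - m < m)).2
        (hvlt _ (by omega : i2.val - m < m)).2 _ (ha.trans hb.symm)
      have hveq := congrArg ZMod.val this
      rw [(hvlt _ (by omega : i1.val - m < m)).1,
        (hvlt _ (by omega : i2.val - m < m)).1] at hveq
      exact hne (Fin.ext (by omega))

end Wal

/-- For every `n ≥ 3`, there is a family of directed Hamiltonian cycles in the complete
digraph on `n` vertices whose arc sets together cover all `n(n-1)` arcs (an arc `(u,v)` with
`u ≠ v` is covered by the cycle `σ i` iff `σ i u = v`), where the family has `n-1` cycles if
`n` is odd and `n` cycles if `n` is even; moreover, when `n` is odd the `n-1` cycles can be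
chosen pairwise arc-disjoint, so that their arc sets partition the arcs of the complete
digraph. -/
theorem complete_digraph_hamiltonian_cover (n : ℕ) (hn : 3 ≤ n) :
    ∃ (c : ℕ) (σ : Fin c → Equiv.Perm (Fin n)),
      (∀ i, IsDirHamCycle (σ i)) ∧
      (∀ u v : Fin n, u ≠ v → ∃ i, (σ i) u = v) ∧
      (Odd n → c = n - 1) ∧
      (Even n → c = n) ∧
      (Odd n → ∀ i j, i ≠ j → ∀ u : Fin n, (σ i) u ≠ (σ j) u) := by
  rcases Nat.even_or_odd n with he | ho
  · -- even case
    obtain ⟨m, hm⟩ := he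
    have hmn : n = 2 * m := by omega
    subst hmn
    have hm2 : 2 ≤ m := by omega
    obtain ⟨σ, hham, hcov⟩ := Wal.even_main m hm2
    have hno : ¬ Odd (2 * m) := by rw [Nat.odd_iff]; omega
    exact ⟨2 * m, σ, fun i => ⟨(hham i).1, (hham i).2⟩, hcov,
      fun h => absurd h hno, fun _ => rfl, fun h => absurd h hno⟩
  · -- odd case
    obtain ⟨m, hm⟩ := ho
    subst hm
    have hm1 : 1 ≤ m := by omega
    obtain ⟨σ, hham, hdisc⟩ := Wal.odd_main m hm1
    have hder : ∀ (i : Fin (2 * m)) (u : Fin (2 * m + 1)), σ i u ≠ u := by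
      intro i u
      exact Perm.mem_support.mp (by rw [(hham i).2]; exact Finset.mem_univ u)
    have hcov := Wal.cover_of_discordant (n := 2 * m + 1) σ hder hdisc
    have hne : ¬ Even (2 * m + 1) := by rw [Nat.even_iff]; omega
    exact ⟨2 * m, σ, fun i => ⟨(hham i).1, (hham i).2⟩, hcov,
      fun _ => rfl, fun h => absurd h hne, fun _ => hdisc⟩
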